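/- Let F : A → B be a fully faithful functor with adjoints L ⊣ F ⊣ R, and suppose there exists a natural isomorphism α : R ≅ L. Then the canonical map φ : R → L defined by φ = (η_R⁻¹ L) ∘ (R η_L) is itself a natural isomorphism. -/

import Mathlib

open CategoryTheory

/-- If `F` is fully faithful with adjoints `L ⊣ F ⊣ R` and the two
adjoints are isomorphic via some natural isomorphism `α : R ≅ L`, then the
canonical map `φ = (η_R⁻¹ L) ∘ (R η_L) : R ⟶ L` is itself an isomorphism. -/
theorem frobenius_canonical_map_iso {A B : Type*} [Category A] [Category B]
    (F : A ⥤ B) (L R : B ⥤ A) (adjL : L ⊣ F) (adjR : F ⊣ R)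
    [F.Full] [F.Faithful] (α : R ≅ L) :
    IsIso (Functor.whiskerRight adjL.unit R ≫ inv (Functor.whiskerLeft L adjR.unit)) := by
  have hL : ∀ b : B, IsIso (L.map (adjL.unit.app b)) := by
    intro b
    have h : L.map (adjL.unit.app b) = inv (adjL.counit.app (L.obj b)) :=
      IsIso.eq_inv_of_inv_hom_id (adjL.left_triangle_components b)
    rw [h]
    infer_instance
  have hR : ∀ b : B, IsIso (R.map (adjL.unit.app b)) := by
    intro b
    have hn := α.hom.naturality (adjL.unit.app b)
    simp only [Functor.id_obj, Functor.comp_obj] at hn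
    have : R.map (adjL.unit.app b)
        = α.hom.app b ≫ L.map (adjL.unit.app b) ≫ α.inv.app (F.obj (L.obj b)) := by
      rw [← Category.assoc, ← hn]; simp
    rw [this]
    have := hL b
    infer_instance
  haveI : ∀ b : B, IsIso ((Functor.whiskerRight adjL.unit R).app b) := fun b => by
    simpa using hR b
  haveI : IsIso (Functor.whiskerRight adjL.unit R) := NatIso.isIso_of_isIso_app _
  infer_instance
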